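/- Let c < a < d be real numbers, set δ := (d-c)/2, and let f : ℝ → ℂ be differentiable at every point of [c,d] with derivative f' interval-integrable on [c,d] and with f(c) = f(d). Then for every integer ℓ ≥ 1, the symmetric partial sum of the nonconstant Fourier terms of f at a on [c,d] satisfies ∑_{n=-ℓ, n≠0}^{ℓ} c_n e^{iπna/δ} = - ∑_{n=1}^{ℓ} (1/(πn)) ∫_c^d sin(πn(u-a)/δ) f'(u) du, where c_n := (1/(2δ)) ∫_c^d f(u) e^{-iπnu/δ} du. -/

import Mathlib

open MeasureTheory intervalIntegral

/-- The partial-sum identity from the proof of the Cesàro part of the paper's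
Theorem 1: for `f` differentiable on `[c,d]` with integrable derivative and
`f(c) = f(d)`, for every `ℓ ≥ 1`,
`∑_{n=-ℓ, n≠0}^{ℓ} c_n e^{iπna/δ} = -∑_{n=1}^{ℓ} (1/(πn)) ∫_c^d sin(πn(u-a)/δ) f'(u) du`,
where `c_n = (1/(2δ)) ∫_c^d f(u) e^{-iπnu/δ} du` and `δ = (d-c)/2`. -/
theorem fourier_partial_sum_identity (c a d : ℝ) (hca : c < a) (had : a < d)
    (δ : ℝ) (hδ : δ = (d - c) / 2)
    (f f' : ℝ → ℂ)
    (hdiff : ∀ x ∈ Set.Icc c d, HasDerivAt f (f' x) x)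
    (hint : IntervalIntegrable f' volume c d)
    (hper : f c = f d) :
    ∀ ℓ : ℕ, 1 ≤ ℓ →
      ∑ n ∈ (Finset.Icc (-(ℓ : ℤ)) (ℓ : ℤ)).erase 0,
          (((1 / (2 * δ) : ℝ) : ℂ) *
              ∫ u in c..d, f u * Complex.exp (-(Complex.I * Real.pi * n * u) / δ)) *
            Complex.exp (Complex.I * Real.pi * n * a / δ)
        = -∑ n ∈ Finset.Icc 1 ℓ, ((1 / (Real.pi * n) : ℝ) : ℂ) *
            ∫ u in c..d, ((Real.sin (Real.pi * n * (u - a) / δ) : ℝ) : ℂ) * f' u := by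
  intro ℓ hℓ
  have hcd : c < d := hca.trans had
  have hδpos : 0 < δ := by rw [hδ]; linarith
  have hδ0 : (δ : ℂ) ≠ 0 := Complex.ofReal_ne_zero.mpr hδpos.ne'
  have hπ0 : ((Real.pi : ℂ)) ≠ 0 := Complex.ofReal_ne_zero.mpr Real.pi_ne_zero
  have hI := Complex.I_ne_zero
  set T : ℤ → ℂ := fun n =>
    (((1 / (2 * δ) : ℝ) : ℂ) *
        ∫ u in c..d, f u * Complex.exp (-(Complex.I * Real.pi * n * u) / δ)) *
      Complex.exp (Complex.I * Real.pi * n * a / δ) with hT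
  set S : ℤ → ℂ := fun n =>
    ∫ u in c..d, Complex.exp (-(Complex.I * Real.pi * n * (u - a)) / δ) * f' u with hS
  have hSint : ∀ n : ℤ, IntervalIntegrable
      (fun u : ℝ => Complex.exp (-(Complex.I * Real.pi * n * (u - a)) / δ) * f' u)
      volume c d := by
    intro n
    apply hint.continuousOn_mul
    apply Continuous.continuousOn
    fun_prop
  have key : ∀ n : ℤ, n ≠ 0 → T n = (1 / (2 * Complex.I * Real.pi * n)) * S n := by
    intro n hn
    have hn0 : (n : ℂ) ≠ 0 := Int.cast_ne_zero.mpr hn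
    set b : ℂ := -(Complex.I * Real.pi * n) / δ with hb
    set k : ℂ := δ / (-(Complex.I * Real.pi * n)) with hk
    have hkb : k * b = 1 := by
      rw [hk, hb]
      field_simp
    have hE : ∀ x : ℝ, HasDerivAt
        (fun u : ℝ => k * Complex.exp (-(Complex.I * Real.pi * n * ((u : ℂ) - a)) / δ))
        (Complex.exp (-(Complex.I * Real.pi * n * ((x : ℂ) - a)) / δ)) x := by
      intro x
      have hcoe : HasDerivAt (fun u : ℝ => (u : ℂ)) 1 x := by
        simpa using (hasDerivAt_id x).ofReal_comp
      have h1 : HasDerivAt (fun u : ℝ => b * ((u : ℂ) - a)) (b * 1) x :=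
        (hcoe.sub_const _).const_mul b
      have hfun : (fun u : ℝ => -(Complex.I * Real.pi * n * ((u : ℂ) - a)) / δ)
          = fun u : ℝ => b * ((u : ℂ) - a) := by
        funext u; rw [hb]; ring
      have h1' : HasDerivAt
          (fun u : ℝ => -(Complex.I * Real.pi * n * ((u : ℂ) - a)) / δ) b x := by
        rw [hfun]; simpa using h1
      have h2 := h1'.cexp.const_mul k
      have heq : k * (Complex.exp (-(Complex.I * Real.pi * n * ((x : ℂ) - a)) / δ) * b)
          = Complex.exp (-(Complex.I * Real.pi * n * ((x : ℂ) - a)) / δ) := by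
        rw [mul_comm (Complex.exp _) b, ← mul_assoc, hkb, one_mul]
      rw [heq] at h2
      exact h2
    have hv'int : IntervalIntegrable
        (fun u : ℝ => Complex.exp (-(Complex.I * Real.pi * n * ((u : ℂ) - a)) / δ))
        volume c d := by
      apply Continuous.intervalIntegrable
      fun_prop
    have parts := integral_mul_deriv_eq_deriv_mul
      (u := f) (u' := f')
      (v := fun u : ℝ => k * Complex.exp (-(Complex.I * Real.pi * n * ((u : ℂ) - a)) / δ))
      (v' := fun u : ℝ => Complex.exp (-(Complex.I * Real.pi * n * ((u : ℂ) - a)) / δ))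
      (fun x hx => hdiff x (by rwa [Set.uIcc_of_le hcd.le] at hx))
      (fun x _ => hE x) hint hv'int
    have hexp_eq : Complex.exp (-(Complex.I * Real.pi * n * ((d : ℂ) - a)) / δ)
        = Complex.exp (-(Complex.I * Real.pi * n * ((c : ℂ) - a)) / δ) := by
      have h2δ : ((d : ℂ) - c) = 2 * δ := by rw [hδ]; push_cast; ring
      have h4 : -(Complex.I * Real.pi * (n : ℂ) * 2 * (δ : ℂ)) / (δ : ℂ)
          = ((-n : ℤ) : ℂ) * (2 * Real.pi * Complex.I) := by
        rw [neg_div, mul_div_assoc, div_self hδ0, mul_one]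
        push_cast
        ring
      have hexpo : -(Complex.I * Real.pi * n * ((d : ℂ) - a)) / δ
          = -(Complex.I * Real.pi * n * ((c : ℂ) - a)) / δ
            + ((-n : ℤ) : ℂ) * (2 * Real.pi * Complex.I) := by
        rw [show -(Complex.I * Real.pi * (n : ℂ) * ((d : ℂ) - a))
            = -(Complex.I * Real.pi * (n : ℂ) * ((c : ℂ) - a))
              + -(Complex.I * Real.pi * (n : ℂ) * 2 * (δ : ℂ)) from by
          linear_combination (-(Complex.I * Real.pi * (n : ℂ))) * h2δ, add_div, h4]
      rw [hexpo, Complex.exp_add, Complex.exp_int_mul_two_pi_mul_I, mul_one]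
    have hbound : f d * (k * Complex.exp (-(Complex.I * Real.pi * n * ((d : ℂ) - a)) / δ))
        - f c * (k * Complex.exp (-(Complex.I * Real.pi * n * ((c : ℂ) - a)) / δ)) = 0 := by
      rw [hper, hexp_eq, sub_self]
    have hintS : (∫ x in c..d, f' x *
        (k * Complex.exp (-(Complex.I * Real.pi * n * ((x : ℂ) - a)) / δ))) = k * S n := by
      rw [hS]
      rw [show (fun x : ℝ => f' x *
          (k * Complex.exp (-(Complex.I * Real.pi * n * ((x : ℂ) - a)) / δ)))
          = fun x : ℝ => k * (Complex.exp (-(Complex.I * Real.pi * n * ((x : ℂ) - a)) / δ) * f' x)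
        from funext fun x => by ring] at *
      exact intervalIntegral.integral_const_mul k _
    rw [hbound, hintS, zero_sub] at parts
    have hpull : (∫ u in c..d, f u * Complex.exp (-(Complex.I * Real.pi * n * u) / δ)) *
        Complex.exp (Complex.I * Real.pi * n * a / δ)
        = ∫ u in c..d, f u * Complex.exp (-(Complex.I * Real.pi * n * ((u : ℂ) - a)) / δ) := by
      rw [← intervalIntegral.integral_mul_const]
      apply intervalIntegral.integral_congr
      intro u _
      simp only [mul_assoc, ← Complex.exp_add]
      congr 2
      ring
    rw [hT]
    simp only []
    rw [mul_assoc, hpull, parts]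
    rw [hk]
    push_cast
    field_simp
  -- difference of S's
  have hsub : ∀ n : ℤ, S n - S (-n) = (-2 * Complex.I) * ∫ u in c..d,
      ((Real.sin (Real.pi * n * (u - a) / δ) : ℝ) : ℂ) * f' u := by
    intro n
    rw [hS]
    simp only []
    rw [← intervalIntegral.integral_sub (hSint _) (hSint _),
      ← intervalIntegral.integral_const_mul]
    apply intervalIntegral.integral_congr
    intro u _
    simp only []
    have hpt : Complex.exp (-(Complex.I * Real.pi * n * ((u : ℂ) - a)) / δ)
        - Complex.exp (-(Complex.I * Real.pi * ((-n : ℤ) : ℂ) * ((u : ℂ) - a)) / δ)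
        = -2 * Complex.I * ((Real.sin (Real.pi * n * (u - a) / δ) : ℝ) : ℂ) := by
      rw [show -(Complex.I * Real.pi * (n : ℂ) * ((u : ℂ) - a)) / δ
            = -((Real.pi * n * (u - a) / δ : ℝ) : ℂ) * Complex.I from by push_cast; ring,
        show -(Complex.I * Real.pi * ((-n : ℤ) : ℂ) * ((u : ℂ) - a)) / δ
            = ((Real.pi * n * (u - a) / δ : ℝ) : ℂ) * Complex.I from by push_cast; ring,
        Complex.ofReal_sin]
      simp only [Complex.sin]
      linear_combination (Complex.exp (-((Real.pi * n * (u - a) / δ : ℝ) : ℂ) * Complex.I)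
        - Complex.exp (((Real.pi * n * (u - a) / δ : ℝ) : ℂ) * Complex.I)) * Complex.I_sq
    linear_combination (f' u) * hpt
  -- per-term pairing identity (for natural m ≥ 1)
  have pair : ∀ m : ℕ, 1 ≤ m → T (-(m : ℤ)) + T (m : ℤ)
      = -(((1 / (Real.pi * m) : ℝ) : ℂ) *
          ∫ u in c..d, ((Real.sin (Real.pi * m * (u - a) / δ) : ℝ) : ℂ) * f' u) := by
    intro m hm
    have hmz : (m : ℤ) ≠ 0 := by omega
    have hmz' : (-(m : ℤ)) ≠ 0 := by omega
    have hm0 : ((m : ℤ) : ℂ) ≠ 0 := Int.cast_ne_zero.mpr hmz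
    have hm0' : ((m : ℕ) : ℂ) ≠ 0 := Nat.cast_ne_zero.mpr (by omega)
    have hmR : ((m : ℕ) : ℝ) ≠ 0 := Nat.cast_ne_zero.mpr (by omega)
    rw [key _ hmz, key _ hmz']
    have h := hsub (m : ℤ)
    simp only [Int.cast_natCast] at h
    set P := ∫ u in c..d, ((Real.sin (Real.pi * (m : ℝ) * (u - a) / δ) : ℝ) : ℂ) * f' u with hP
    rw [show S (-(m : ℤ)) = S (m : ℤ) + 2 * Complex.I * P from by linear_combination -h]
    push_cast
    simp only [one_div, mul_inv, inv_neg, Complex.inv_I]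
    linear_combination ((Real.pi : ℂ))⁻¹ * ((m : ℂ))⁻¹ * P * Complex.I_sq
  -- split the sum
  have hsplit : (Finset.Icc (-(ℓ : ℤ)) (ℓ : ℤ)).erase 0
      = Finset.Icc (-(ℓ : ℤ)) (-1) ∪ Finset.Icc 1 (ℓ : ℤ) := by
    ext x
    simp only [Finset.mem_erase, Finset.mem_Icc, Finset.mem_union]
    omega
  have hdisj : Disjoint (Finset.Icc (-(ℓ : ℤ)) (-1)) (Finset.Icc 1 (ℓ : ℤ)) := by
    rw [Finset.disjoint_left]
    intro x hx hx'
    simp only [Finset.mem_Icc] at hx hx'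
    omega
  have hneg : ∑ n ∈ Finset.Icc (-(ℓ : ℤ)) (-1), T n = ∑ n ∈ Finset.Icc 1 (ℓ : ℤ), T (-n) := by
    apply Finset.sum_nbij' (i := fun n => -n) (j := fun n => -n)
    · intro n hn; simp only [Finset.mem_Icc] at *; omega
    · intro n hn; simp only [Finset.mem_Icc] at *; omega
    · intro n _; ring
    · intro n _; ring
    · intro n _; rw [neg_neg]
  rw [hsplit, Finset.sum_union hdisj, hneg, ← Finset.sum_add_distrib]
  have hnat : ∑ n ∈ Finset.Icc 1 (ℓ : ℤ), (T (-n) + T n)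
      = ∑ n ∈ Finset.Icc 1 ℓ, (T (-(n : ℤ)) + T (n : ℤ)) := by
    apply Finset.sum_nbij' (i := fun n : ℤ => n.toNat) (j := fun n : ℕ => (n : ℤ))
    · intro n hn; simp only [Finset.mem_Icc] at *; omega
    · intro n hn; simp only [Finset.mem_Icc] at *; omega
    · intro n hn; simp only [Finset.mem_Icc] at hn; omega
    · intro n hn; simp
    · intro n hn
      simp only [Finset.mem_Icc] at hn
      congr 2 <;> omega
  rw [hnat]
  rw [← Finset.sum_neg_distrib]
  apply Finset.sum_congr rfl
  intro n hn
  simp only [Finset.mem_Icc] at hn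
  exact pair n hn.1
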